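/- Let c ∈ (0,1) and let μ be a Borel probability measure on [0,∞) with ∫ log(1+x) dμ(x) < ∞ and μ({0}) < 1 − c (subcritical case). Then the equation ∫ x/(c·x + (1−c)·η) dμ(x) = 1 has a unique solution η = η(μ,c) in (0,∞); the infimum inf_{y>0} ∫ K(x,y,c) dμ(x) is attained at y = η and at no other point; and consequently [μ]_c = exp ∫ K(x,η,c) dμ(x). -/

import Mathlib

open MeasureTheory Filter Topology
open scoped ENNReal

noncomputable def elogr (t : ℝ) : EReal := if t ≤ 0 then ⊥ else ((Real.log t : ℝ) : EReal)

/-- The Halász–Székely kernel, with values in `[-∞, +∞)` (`EReal`). -/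
noncomputable def hsKernel (c x y : ℝ) : EReal :=
  if c = 0 then ((Real.log y + y⁻¹ * x - 1 : ℝ) : EReal)
  else ((Real.log y : ℝ) : EReal) + ((c⁻¹ : ℝ) : EReal) * elogr (c * y⁻¹ * x + 1 - c)

/-- The nonnegative part of an extended real, as an element of `[0,∞]`. -/
noncomputable def erealToENNReal (x : EReal) : ℝ≥0∞ :=
  if x = ⊤ then ⊤ else ENNReal.ofReal x.toReal

/-- Integral of an `EReal`-valued function: positive part minus negative part. -/
noncomputable def eIntegral (μ : Measure ℝ) (f : ℝ → EReal) : EReal :=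
  ((∫⁻ x, erealToENNReal (f x) ∂μ : ℝ≥0∞) : EReal) - ((∫⁻ x, erealToENNReal (-f x) ∂μ : ℝ≥0∞) : EReal)

/-- Exponential on `EReal`, with values in `[0,∞]`. -/
noncomputable def eexp (x : EReal) : ℝ≥0∞ :=
  if x = ⊤ then ⊤ else if x = ⊥ then 0 else ENNReal.ofReal (Real.exp x.toReal)

/-- The Halász–Székely barycenter `[μ]_c ∈ [0,∞]`. -/
noncomputable def hsBary (c : ℝ) (μ : Measure ℝ) : ℝ≥0∞ :=
  eexp (⨅ y : {y : ℝ // 0 < y}, eIntegral μ (fun x => hsKernel c x y))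

/-- The function `B`. -/
noncomputable def hsB (c : ℝ) : ℝ :=
  if c = 0 then 0 else if c = 1 then 1 else c * (1 - c) ^ ((1 - c) / c)

/-- The uniform probability measure on the entries of a tuple. -/
noncomputable def unifMeasure {n : ℕ} (x : Fin n → ℝ) : Measure ℝ :=
  (n : ℝ≥0∞)⁻¹ • ∑ i, MeasureTheory.Measure.dirac (x i)

/-- The Halász–Székely mean of a tuple. -/
noncomputable def hsMean (c : ℝ) {n : ℕ} (x : Fin n → ℝ) : ℝ≥0∞ := hsBary c (unifMeasure x)

/-- The `k`-th symmetric mean of an `n`-tuple. -/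
noncomputable def symMean {n : ℕ} (k : ℕ) (x : Fin n → ℝ) : ℝ :=
  ((∑ s ∈ Finset.univ.powersetCard k, ∏ i ∈ s, x i) / (n.choose k)) ^ ((k : ℝ)⁻¹)


open Set

noncomputable def hsg (c y x : ℝ) : ℝ := Real.log y + c⁻¹ * Real.log (c * y⁻¹ * x + 1 - c)

lemma hsg_diff_eq (c : ℝ) (hc0 : 0 < c) (hc1 : c < 1) {x η y : ℝ} (hx : 0 ≤ x)
    (hη : 0 < η) (hy : 0 < y) :
    hsg c y x - hsg c η x =
      (1 - c⁻¹) * Real.log (y / η) +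
        c⁻¹ * Real.log (((1 - c) * η / (c * x + (1 - c) * η)) * (y / η)
          + 1 - (1 - c) * η / (c * x + (1 - c) * η)) := by
  have hA : 0 < c * x + (1 - c) * η := by nlinarith
  set A := c * x + (1 - c) * η with hAdef
  set s := (1 - c) * η / A with hsdef
  set r := y / η with hrdef
  have hs0 : 0 < s := div_pos (by nlinarith) hA
  have hs1 : s ≤ 1 := by
    rw [hsdef, div_le_one hA]; nlinarith
  have hr0 : 0 < r := div_pos hy hη
  have hDy : 0 < c * x + (1 - c) * y := by nlinarith
  have key : ∀ z : ℝ, 0 < z → hsg c z x =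
      Real.log z + c⁻¹ * (Real.log (c * x + (1 - c) * z) - Real.log z) := by
    intro z hz
    have harg : c * z⁻¹ * x + 1 - c = (c * x + (1 - c) * z) / z := by
      field_simp; ring
    rw [hsg, harg, Real.log_div (by nlinarith) hz.ne']
  have hsr : c * x + (1 - c) * y = A * (s * r + 1 - s) := by
    rw [hsdef, hrdef]; field_simp; ring
  have hsrpos : 0 < s * r + 1 - s := by nlinarith [mul_pos hs0 hr0]
  rw [key y hy, key η hη, hsr, Real.log_mul hA.ne' hsrpos.ne',
    Real.log_div hy.ne' hη.ne']
  ring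

lemma log_concave_ineq {s r : ℝ} (hs0 : 0 < s) (hs1 : s ≤ 1) (hr : 0 < r) :
    s * Real.log r ≤ Real.log (s * r + 1 - s) := by
  rcases eq_or_lt_of_le hs1 with h | h
  · subst h; simp
  · have := strictConcaveOn_log_Ioi.concaveOn.2 (Set.mem_Ioi.2 hr)
      (Set.mem_Ioi.2 one_pos) hs0.le (by linarith : (0:ℝ) ≤ 1 - s) (by ring)
    simp only [smul_eq_mul, Real.log_one, mul_zero, add_zero] at this
    calc s * Real.log r ≤ Real.log (s * r + (1 - s) * 1) := this
    _ = Real.log (s * r + 1 - s) := by ring_nf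

lemma log_concave_ineq_strict {s r : ℝ} (hs0 : 0 < s) (hs1 : s < 1) (hr : 0 < r)
    (hrne : r ≠ 1) : s * Real.log r < Real.log (s * r + 1 - s) := by
  have := strictConcaveOn_log_Ioi.2 (Set.mem_Ioi.2 hr)
    (Set.mem_Ioi.2 one_pos) hrne hs0 (by linarith : (0:ℝ) < 1 - s) (by ring)
  simp only [smul_eq_mul, Real.log_one, mul_zero, add_zero] at this
  calc s * Real.log r < Real.log (s * r + (1 - s) * 1) := this
  _ = Real.log (s * r + 1 - s) := by ring_nf

lemma hsg_key (c : ℝ) (hc0 : 0 < c) (hc1 : c < 1) {x η y : ℝ} (hx : 0 ≤ x)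
    (hη : 0 < η) (hy : 0 < y) :
    (1 - x / (c * x + (1 - c) * η)) * Real.log (y / η) ≤ hsg c y x - hsg c η x := by
  rw [hsg_diff_eq c hc0 hc1 hx hη hy]
  have hA : 0 < c * x + (1 - c) * η := by nlinarith
  set A := c * x + (1 - c) * η with hAdef
  set s := (1 - c) * η / A with hsdef
  set r := y / η with hrdef
  have hs0 : 0 < s := div_pos (by nlinarith) hA
  have hs1 : s ≤ 1 := by rw [hsdef, div_le_one hA]; nlinarith
  have hr0 : 0 < r := div_pos hy hη
  have hxA : x / A = c⁻¹ * (1 - s) := by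
    rw [hsdef]; field_simp; ring
  rw [hxA]
  have h := mul_le_mul_of_nonneg_left (log_concave_ineq hs0 hs1 hr0) (inv_nonneg.2 hc0.le)
  nlinarith [h]

lemma hsg_key_strict (c : ℝ) (hc0 : 0 < c) (hc1 : c < 1) {x η y : ℝ} (hx : 0 < x)
    (hη : 0 < η) (hy : 0 < y) (hne : y ≠ η) :
    (1 - x / (c * x + (1 - c) * η)) * Real.log (y / η) < hsg c y x - hsg c η x := by
  rw [hsg_diff_eq c hc0 hc1 hx.le hη hy]
  have hA : 0 < c * x + (1 - c) * η := by nlinarith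
  set A := c * x + (1 - c) * η with hAdef
  set s := (1 - c) * η / A with hsdef
  set r := y / η with hrdef
  have hs0 : 0 < s := div_pos (by nlinarith) hA
  have hs1 : s < 1 := by rw [hsdef, div_lt_one hA]; nlinarith
  have hr0 : 0 < r := div_pos hy hη
  have hrne : r ≠ 1 := by
    rw [hrdef]; intro h
    exact hne (by field_simp at h; linarith)
  have hxA : x / A = c⁻¹ * (1 - s) := by
    rw [hsdef]; field_simp; ring
  rw [hxA]
  have h := mul_lt_mul_of_pos_left (log_concave_ineq_strict hs0 hs1 hr0 hrne) (inv_pos.2 hc0)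
  nlinarith [h]

open MeasureTheory Filter Topology
open scoped ENNReal

lemma hsg_measurable (c y : ℝ) : Measurable (hsg c y) := by
  have h1 : Measurable fun x : ℝ => c * y⁻¹ * x + 1 - c :=
    ((measurable_id.const_mul _).add_const _).sub_const _
  exact measurable_const.add ((Real.measurable_log.comp h1).const_mul _)

lemma hsg_integrable (c : ℝ) (hc0 : 0 < c) (hc1 : c < 1) {y : ℝ} (hy : 0 < y)
    {μ : Measure ℝ} [IsProbabilityMeasure μ] (hx_ae : ∀ᵐ x ∂μ, 0 ≤ x)
    (hint : Integrable (fun x => Real.log (1 + x)) μ) :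
    Integrable (hsg c y) μ := by
  set C : ℝ := |Real.log y| + c⁻¹ * (|Real.log (1 - c)| + |Real.log (c * y⁻¹ + 1)|) with hC
  refine Integrable.mono' (g := fun x => C + c⁻¹ * Real.log (1 + x))
    ((integrable_const C).add (hint.const_mul c⁻¹)) (hsg_measurable c y).aestronglyMeasurable ?_
  filter_upwards [hx_ae] with x hx
  have hcy : 0 < c * y⁻¹ := mul_pos hc0 (inv_pos.2 hy)
  have ht0 : 0 < c * y⁻¹ * x + 1 - c := by nlinarith
  have ht1 : 1 - c ≤ c * y⁻¹ * x + 1 - c := by nlinarith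
  have ht2 : c * y⁻¹ * x + 1 - c ≤ (c * y⁻¹ + 1) * (1 + x) := by nlinarith
  have hlog1x : 0 ≤ Real.log (1 + x) := Real.log_nonneg (by linarith)
  have hup : Real.log (c * y⁻¹ * x + 1 - c) ≤ |Real.log (c * y⁻¹ + 1)| + Real.log (1 + x) := by
    calc Real.log (c * y⁻¹ * x + 1 - c) ≤ Real.log ((c * y⁻¹ + 1) * (1 + x)) :=
          Real.log_le_log ht0 ht2
      _ = Real.log (c * y⁻¹ + 1) + Real.log (1 + x) :=
          Real.log_mul (by nlinarith) (by nlinarith)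
      _ ≤ |Real.log (c * y⁻¹ + 1)| + Real.log (1 + x) := by
          linarith [le_abs_self (Real.log (c * y⁻¹ + 1))]
  have hlo : -(|Real.log (1 - c)|) ≤ Real.log (c * y⁻¹ * x + 1 - c) := by
    calc -(|Real.log (1 - c)|) ≤ Real.log (1 - c) := neg_abs_le _
      _ ≤ _ := Real.log_le_log (by linarith) ht1
  have habs : |Real.log (c * y⁻¹ * x + 1 - c)| ≤
      |Real.log (1 - c)| + |Real.log (c * y⁻¹ + 1)| + Real.log (1 + x) := by
    rw [abs_le]
    constructor
    · have h1 : (0:ℝ) ≤ |Real.log (c * y⁻¹ + 1)| := abs_nonneg _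
      linarith
    · have h1 : (0:ℝ) ≤ |Real.log (1 - c)| := abs_nonneg _
      linarith
  have hcinv : (0:ℝ) ≤ c⁻¹ := (inv_pos.2 hc0).le
  calc ‖hsg c y x‖ = |Real.log y + c⁻¹ * Real.log (c * y⁻¹ * x + 1 - c)| := rfl
    _ ≤ |Real.log y| + |c⁻¹ * Real.log (c * y⁻¹ * x + 1 - c)| := abs_add_le _ _
    _ = |Real.log y| + c⁻¹ * |Real.log (c * y⁻¹ * x + 1 - c)| := by
        rw [abs_mul, abs_of_nonneg hcinv]
    _ ≤ C + c⁻¹ * Real.log (1 + x) := by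
        have := mul_le_mul_of_nonneg_left habs hcinv
        rw [hC]; nlinarith [this]

lemma hsh_nonneg (c : ℝ) (hc0 : 0 < c) (hc1 : c < 1) {x y : ℝ} (hx : 0 ≤ x) (hy : 0 < y) :
    0 ≤ x / (c * x + (1 - c) * y) :=
  div_nonneg hx (by nlinarith)

lemma hsh_le (c : ℝ) (hc0 : 0 < c) (hc1 : c < 1) {x y : ℝ} (hx : 0 ≤ x) (hy : 0 < y) :
    x / (c * x + (1 - c) * y) ≤ c⁻¹ := by
  have hD : 0 < c * x + (1 - c) * y := by nlinarith
  rw [div_le_iff₀ hD]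
  have h1 : c * c⁻¹ = 1 := mul_inv_cancel₀ hc0.ne'
  nlinarith [mul_pos (inv_pos.2 hc0) (mul_pos (by linarith : (0:ℝ) < 1 - c) hy)]

lemma hsh_measurable (c y : ℝ) : Measurable (fun x : ℝ => x / (c * x + (1 - c) * y)) :=
  measurable_id.div ((measurable_id.const_mul c).add_const _)

lemma hsh_integrable (c : ℝ) (hc0 : 0 < c) (hc1 : c < 1) {y : ℝ} (hy : 0 < y)
    {μ : Measure ℝ} [IsProbabilityMeasure μ] (hx_ae : ∀ᵐ x ∂μ, 0 ≤ x) :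
    Integrable (fun x => x / (c * x + (1 - c) * y)) μ := by
  refine Integrable.mono' (g := fun _ => c⁻¹) (integrable_const _)
    (hsh_measurable c y).aestronglyMeasurable ?_
  filter_upwards [hx_ae] with x hx
  rw [Real.norm_eq_abs, abs_of_nonneg (hsh_nonneg c hc0 hc1 hx hy)]
  exact hsh_le c hc0 hc1 hx hy

lemma mu_Ioi_pos {μ : Measure ℝ} [IsProbabilityMeasure μ] (hsupp : μ (Set.Iio 0) = 0)
    {c : ℝ} (hc0 : 0 < c) (hc1 : c < 1) (hsub : μ {0} < ENNReal.ofReal (1 - c)) :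
    0 < μ (Set.Ioi 0) := by
  by_contra h0
  push_neg at h0
  have h0' : μ (Set.Ioi 0) = 0 := le_antisymm h0 (zero_le)
  have hcover : (Set.univ : Set ℝ) ⊆ Set.Iio 0 ∪ ({0} ∪ Set.Ioi 0) := by
    intro x _
    rcases lt_trichotomy x 0 with h | h | h
    · exact Or.inl h
    · exact Or.inr (Or.inl h)
    · exact Or.inr (Or.inr h)
  have : (1 : ℝ≥0∞) ≤ μ {0} := by
    calc (1:ℝ≥0∞) = μ Set.univ := (measure_univ).symm
      _ ≤ μ (Set.Iio 0) + (μ {0} + μ (Set.Ioi 0)) :=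
          le_trans (measure_mono hcover) (le_trans (measure_union_le _ _)
            (add_le_add le_rfl (measure_union_le _ _)))
      _ = μ {0} := by rw [hsupp, h0', zero_add, add_zero]
  have hlt : μ {0} < 1 := lt_of_lt_of_le hsub (by
    calc ENNReal.ofReal (1 - c) ≤ ENNReal.ofReal 1 := ENNReal.ofReal_le_ofReal (by linarith)
      _ = 1 := ENNReal.ofReal_one)
  exact absurd (lt_of_le_of_lt this hlt) (lt_irrefl _)

lemma hsG_strict_anti (c : ℝ) (hc0 : 0 < c) (hc1 : c < 1) {μ : Measure ℝ}
    [IsProbabilityMeasure μ] (hx_ae : ∀ᵐ x ∂μ, 0 ≤ x) (hIoi : 0 < μ (Set.Ioi 0))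
    {y₁ y₂ : ℝ} (hy₁ : 0 < y₁) (h12 : y₁ < y₂) :
    (∫ x, x / (c * x + (1 - c) * y₂) ∂μ) < ∫ x, x / (c * x + (1 - c) * y₁) ∂μ := by
  have hy₂ : 0 < y₂ := lt_trans hy₁ h12
  set f : ℝ → ℝ := fun x => x / (c * x + (1 - c) * y₁) - x / (c * x + (1 - c) * y₂) with hf
  have hInt₁ := hsh_integrable c hc0 hc1 hy₁ hx_ae
  have hInt₂ := hsh_integrable c hc0 hc1 hy₂ hx_ae
  have hIntf : Integrable f μ := hInt₁.sub hInt₂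
  have hnn : 0 ≤ᶠ[ae μ] f := by
    filter_upwards [hx_ae] with x hx
    have hD₁ : 0 < c * x + (1 - c) * y₁ := by nlinarith
    have hD₂ : c * x + (1 - c) * y₁ ≤ c * x + (1 - c) * y₂ := by nlinarith
    simp only [hf, Pi.zero_apply, sub_nonneg]
    gcongr
  have hsupport : Set.Ioi (0:ℝ) ⊆ Function.support f := by
    intro x hx
    have hx0 : 0 < x := hx
    have hD₁ : 0 < c * x + (1 - c) * y₁ := by nlinarith
    have hD₂ : c * x + (1 - c) * y₁ < c * x + (1 - c) * y₂ := by nlinarith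
    have : x / (c * x + (1 - c) * y₂) < x / (c * x + (1 - c) * y₁) := by gcongr
    simp only [Function.mem_support, hf]
    intro h
    rw [sub_eq_zero] at h
    exact absurd h (ne_of_gt this)
  have hpos : 0 < ∫ x, f x ∂μ := by
    rw [integral_pos_iff_support_of_nonneg_ae hnn hIntf]
    exact lt_of_lt_of_le hIoi (measure_mono hsupport)
  have hsub' := integral_sub hInt₁ hInt₂
  simp only [hf] at hpos
  rw [hsub'] at hpos
  linarith

lemma hsG_continuousOn (c : ℝ) (hc0 : 0 < c) (hc1 : c < 1) {μ : Measure ℝ}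
    [IsProbabilityMeasure μ] (hx_ae : ∀ᵐ x ∂μ, 0 ≤ x) :
    ContinuousOn (fun y => ∫ x, x / (c * x + (1 - c) * y) ∂μ) (Set.Ioi 0) := by
  intro y₀ hy₀
  have hy₀' : (0:ℝ) < y₀ := hy₀
  refine tendsto_integral_filter_of_dominated_convergence (fun _ => c⁻¹)
    (Eventually.of_forall fun y => (hsh_measurable c y).aestronglyMeasurable) ?_
    (integrable_const _) ?_
  · filter_upwards [eventually_mem_nhdsWithin] with y hy
    filter_upwards [hx_ae] with x hx
    rw [Real.norm_eq_abs, abs_of_nonneg (hsh_nonneg c hc0 hc1 hx hy)]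
    exact hsh_le c hc0 hc1 hx hy
  · filter_upwards [hx_ae] with x hx
    have hD : c * x + (1 - c) * y₀ ≠ 0 := by nlinarith
    have : ContinuousAt (fun y => x / (c * x + (1 - c) * y)) y₀ :=
      ContinuousAt.div continuousAt_const
        (continuousAt_const.add (continuousAt_const.mul continuousAt_id)) hD
    exact this.tendsto.mono_left nhdsWithin_le_nhds

lemma hsG_exists_lt (c : ℝ) (hc0 : 0 < c) (hc1 : c < 1) {μ : Measure ℝ}
    [IsProbabilityMeasure μ] (hx_ae : ∀ᵐ x ∂μ, 0 ≤ x) :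
    ∃ b : ℝ, 0 < b ∧ (∫ x, x / (c * x + (1 - c) * b) ∂μ) < 1 := by
  have htend : Tendsto (fun y => ∫ x, x / (c * x + (1 - c) * y) ∂μ) atTop (𝓝 0) := by
    have h0 : (0:ℝ) = ∫ x, (0:ℝ) ∂μ := by simp
    rw [h0]
    refine tendsto_integral_filter_of_dominated_convergence (fun _ => c⁻¹)
      (Eventually.of_forall fun y => (hsh_measurable c y).aestronglyMeasurable) ?_
      (integrable_const _) ?_
    · filter_upwards [eventually_gt_atTop 0] with y hy
      filter_upwards [hx_ae] with x hx
      rw [Real.norm_eq_abs, abs_of_nonneg (hsh_nonneg c hc0 hc1 hx hy)]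
      exact hsh_le c hc0 hc1 hx hy
    · filter_upwards [hx_ae] with x hx
      have hdenom : Tendsto (fun y : ℝ => c * x + (1 - c) * y) atTop atTop := by
        refine tendsto_atTop_add_const_left _ _ ?_
        exact (tendsto_id.const_mul_atTop (by linarith : (0:ℝ) < 1 - c))
      have := hdenom.inv_tendsto_atTop
      have h2 := this.const_mul x
      simpa [div_eq_mul_inv] using h2
  obtain ⟨b, hb⟩ := ((htend.eventually_lt_const one_pos).and (eventually_gt_atTop 0)).exists
  exact ⟨b, hb.2, hb.1⟩

lemma hsG_exists_gt (c : ℝ) (hc0 : 0 < c) (hc1 : c < 1) {μ : Measure ℝ}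
    [IsProbabilityMeasure μ] (hx_ae : ∀ᵐ x ∂μ, 0 ≤ x)
    (hsub : μ {0} < ENNReal.ofReal (1 - c)) :
    ∃ a : ℝ, 0 < a ∧ 1 < ∫ x, x / (c * x + (1 - c) * a) ∂μ := by
  set f₀ : ℝ → ℝ := Set.indicator ({0}ᶜ) (fun _ => c⁻¹) with hf₀
  have htend : Tendsto (fun y => ∫ x, x / (c * x + (1 - c) * y) ∂μ) (𝓝[>] 0)
      (𝓝 (∫ x, f₀ x ∂μ)) := by
    refine tendsto_integral_filter_of_dominated_convergence (fun _ => c⁻¹)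
      (Eventually.of_forall fun y => (hsh_measurable c y).aestronglyMeasurable) ?_
      (integrable_const _) ?_
    · filter_upwards [eventually_mem_nhdsWithin] with y hy
      filter_upwards [hx_ae] with x hx
      rw [Real.norm_eq_abs, abs_of_nonneg (hsh_nonneg c hc0 hc1 hx hy)]
      exact hsh_le c hc0 hc1 hx hy
    · filter_upwards [hx_ae] with x hx
      rcases eq_or_lt_of_le hx with h | h
      · have hx0 : x = 0 := h.symm
        subst hx0
        have : f₀ (0:ℝ) = 0 := by simp [hf₀]
        rw [this]
        simp only [zero_div]
        exact tendsto_const_nhds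
      · have hD : c * x + (1 - c) * (0:ℝ) ≠ 0 := by
          rw [mul_zero, add_zero]; positivity
        have hcont : ContinuousAt (fun y => x / (c * x + (1 - c) * y)) 0 :=
          ContinuousAt.div continuousAt_const
            (continuousAt_const.add (continuousAt_const.mul continuousAt_id)) hD
        have hval : x / (c * x + (1 - c) * (0:ℝ)) = c⁻¹ := by
          rw [mul_zero, add_zero]
          rw [eq_comm, inv_eq_iff_eq_inv, inv_div]
          field_simp
        have hf₀x : f₀ x = c⁻¹ := Set.indicator_of_mem (by simp [h.ne'] : x ∈ ({0}ᶜ : Set ℝ)) _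
        rw [hf₀x, ← hval]
        exact hcont.tendsto.mono_left nhdsWithin_le_nhds
  have hm : (μ {0}).toReal < 1 - c :=
    (ENNReal.lt_ofReal_iff_toReal_lt (measure_ne_top μ _)).1 hsub
  have hcompl : μ ({0}ᶜ : Set ℝ) = 1 - μ {0} := by
    rw [measure_compl (measurableSet_singleton 0) (measure_ne_top μ _), measure_univ]
  have htR : (μ ({0}ᶜ : Set ℝ)).toReal = 1 - (μ {0}).toReal := by
    rw [hcompl, ENNReal.toReal_sub_of_le prob_le_one ENNReal.one_ne_top, ENNReal.toReal_one]
  have hL : (∫ x, f₀ x ∂μ) = (1 - (μ {0}).toReal) * c⁻¹ := by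
    rw [hf₀, integral_indicator_const _ ((measurableSet_singleton 0).compl), smul_eq_mul, measureReal_def, htR]
  have hL1 : 1 < ∫ x, f₀ x ∂μ := by
    rw [hL]
    have : c * c⁻¹ < (1 - (μ {0}).toReal) * c⁻¹ :=
      mul_lt_mul_of_pos_right (by linarith) (inv_pos.2 hc0)
    rwa [mul_inv_cancel₀ hc0.ne'] at this
  obtain ⟨a, ha⟩ := ((htend.eventually_const_lt hL1).and eventually_mem_nhdsWithin).exists
  exact ⟨a, ha.2, ha.1⟩


lemma erealToENNReal_coe (r : ℝ) : erealToENNReal (r : EReal) = ENNReal.ofReal r := by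
  simp [erealToENNReal]

lemma eIntegral_eq_integral (μ : Measure ℝ) (f : ℝ → ℝ) (g : ℝ → EReal)
    (hfg : ∀ᵐ x ∂μ, g x = (f x : EReal)) (hf : Integrable f μ) :
    eIntegral μ g = ((∫ x, f x ∂μ : ℝ) : EReal) := by
  have h1 : (∫⁻ x, erealToENNReal (g x) ∂μ) = ∫⁻ x, ENNReal.ofReal (f x) ∂μ := by
    refine lintegral_congr_ae ?_
    filter_upwards [hfg] with x hx
    rw [hx, erealToENNReal_coe]
  have h2 : (∫⁻ x, erealToENNReal (-g x) ∂μ) = ∫⁻ x, ENNReal.ofReal (-f x) ∂μ := by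
    refine lintegral_congr_ae ?_
    filter_upwards [hfg] with x hx
    rw [hx, ← EReal.coe_neg, erealToENNReal_coe]
  have hfin1 : (∫⁻ x, ENNReal.ofReal (f x) ∂μ) ≠ ⊤ := by
    refine ne_of_lt (lt_of_le_of_lt ?_ hf.hasFiniteIntegral)
    refine lintegral_mono fun x => ?_
    rw [← ofReal_norm_eq_enorm, Real.norm_eq_abs]
    exact ENNReal.ofReal_le_ofReal (le_abs_self _)
  have hfin2 : (∫⁻ x, ENNReal.ofReal (-f x) ∂μ) ≠ ⊤ := by
    refine ne_of_lt (lt_of_le_of_lt ?_ hf.hasFiniteIntegral)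
    refine lintegral_mono fun x => ?_
    rw [← ofReal_norm_eq_enorm, Real.norm_eq_abs]
    exact ENNReal.ofReal_le_ofReal (neg_le_abs _)
  rw [eIntegral, h1, h2, integral_eq_lintegral_pos_part_sub_lintegral_neg_part hf,
    EReal.coe_sub]
  congr 1
  · rw [← EReal.coe_toReal (x := ((∫⁻ x, ENNReal.ofReal (f x) ∂μ : ℝ≥0∞) : EReal)) (by simpa using hfin1) (EReal.coe_ennreal_ne_bot _), EReal.toReal_coe_ennreal]
  · rw [← EReal.coe_toReal (x := ((∫⁻ x, ENNReal.ofReal (-f x) ∂μ : ℝ≥0∞) : EReal)) (by simpa using hfin2) (EReal.coe_ennreal_ne_bot _), EReal.toReal_coe_ennreal]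


lemma hsKernel_eq_hsg (c : ℝ) (hc0 : 0 < c) (hc1 : c < 1) {x y : ℝ} (hx : 0 ≤ x) (hy : 0 < y) :
    hsKernel c x y = ((hsg c y x : ℝ) : EReal) := by
  have ht : 0 < c * y⁻¹ * x + 1 - c := by
    have : 0 ≤ c * y⁻¹ * x := by positivity
    nlinarith
  rw [hsKernel, if_neg hc0.ne', elogr, if_neg (not_le.2 ht), hsg,
    ← EReal.coe_mul, ← EReal.coe_add]

lemma hsG_exists_eq (c : ℝ) (hc0 : 0 < c) (hc1 : c < 1) {μ : Measure ℝ}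
    [IsProbabilityMeasure μ] (hx_ae : ∀ᵐ x ∂μ, 0 ≤ x) (hIoi : 0 < μ (Set.Ioi 0))
    (hsub : μ {0} < ENNReal.ofReal (1 - c)) :
    ∃ η : ℝ, 0 < η ∧ (∫ x, x / (c * x + (1 - c) * η) ∂μ) = 1 := by
  obtain ⟨a, ha0, ha1⟩ := hsG_exists_gt c hc0 hc1 hx_ae hsub
  obtain ⟨b, hb0, hb1⟩ := hsG_exists_lt c hc0 hc1 hx_ae
  have hab : a < b := by
    rcases lt_trichotomy a b with h | h | h
    · exact h
    · rw [h] at ha1; linarith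
    · have := hsG_strict_anti c hc0 hc1 hx_ae hIoi hb0 h
      linarith
  have hsub2 : Set.Icc a b ⊆ Set.Ioi 0 := fun z hz => lt_of_lt_of_le ha0 hz.1
  have := intermediate_value_Icc' hab.le
    ((hsG_continuousOn c hc0 hc1 hx_ae).mono hsub2)
  obtain ⟨η, hηmem, hηeq⟩ := this ⟨hb1.le, ha1.le⟩
  exact ⟨η, lt_of_lt_of_le ha0 hηmem.1, hηeq⟩

set_option maxHeartbeats 1000000 in
/-- in the subcritical case, the equation `∫ x/(cx+(1-c)η) dμ = 1` has a
unique positive solution `η`, the infimum defining `[μ]_c` is attained exactly at `η`,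
and `[μ]_c = exp ∫ K(x,η,c) dμ`. -/
theorem hsBary_subcritical (c : ℝ) (hc : c ∈ Set.Ioo (0 : ℝ) 1) (μ : Measure ℝ)
    [IsProbabilityMeasure μ] (hsupp : μ (Set.Iio 0) = 0)
    (hint : Integrable (fun x => Real.log (1 + x)) μ)
    (hsub : μ {0} < ENNReal.ofReal (1 - c)) :
    ∃ η : ℝ, 0 < η ∧ (∫ x, x / (c * x + (1 - c) * η) ∂μ) = 1 ∧
      (∀ η' : ℝ, 0 < η' → (∫ x, x / (c * x + (1 - c) * η') ∂μ) = 1 → η' = η) ∧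
      (⨅ y : {y : ℝ // 0 < y}, eIntegral μ (fun x => hsKernel c x y)) =
        eIntegral μ (fun x => hsKernel c x η) ∧
      (∀ y : ℝ, 0 < y → y ≠ η →
        eIntegral μ (fun x => hsKernel c x η) < eIntegral μ (fun x => hsKernel c x y)) ∧
      hsBary c μ = eexp (eIntegral μ (fun x => hsKernel c x η)) := by
  obtain ⟨hc0, hc1⟩ := hc
  have hx_ae : ∀ᵐ x ∂μ, 0 ≤ x := by
    have hset : {x : ℝ | ¬ 0 ≤ x} = Set.Iio 0 := by ext x; simp [not_le]
    rw [ae_iff, hset]; exact hsupp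
  have hIoi : 0 < μ (Set.Ioi 0) := mu_Ioi_pos hsupp hc0 hc1 hsub
  obtain ⟨η, hη, hGη⟩ := hsG_exists_eq c hc0 hc1 hx_ae hIoi hsub
  have huniq : ∀ η' : ℝ, 0 < η' → (∫ x, x / (c * x + (1 - c) * η') ∂μ) = 1 → η' = η := by
    intro η' hη' heq'
    rcases lt_trichotomy η' η with h | h | h
    · have := hsG_strict_anti c hc0 hc1 hx_ae hIoi hη' h
      rw [heq', hGη] at this; exact absurd this (lt_irrefl _)
    · exact h
    · have := hsG_strict_anti c hc0 hc1 hx_ae hIoi hη h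
      rw [heq', hGη] at this; exact absurd this (lt_irrefl _)
  have hsgInt : ∀ y : ℝ, 0 < y → Integrable (hsg c y) μ :=
    fun y hy => hsg_integrable c hc0 hc1 hy hx_ae hint
  have hshInt : Integrable (fun x => x / (c * x + (1 - c) * η)) μ :=
    hsh_integrable c hc0 hc1 hη hx_ae
  -- strict minimality at the level of real integrals
  have hmin : ∀ y : ℝ, 0 < y → y ≠ η →
      (∫ x, hsg c η x ∂μ) < ∫ x, hsg c y x ∂μ := by
    intro y hy hne
    set L : ℝ := Real.log (y / η) with hLdef
    set P : ℝ → ℝ := fun x =>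
      (hsg c y x - hsg c η x) - (1 - x / (c * x + (1 - c) * η)) * L with hPdef
    have hIntQ : Integrable (fun x => (1 - x / (c * x + (1 - c) * η)) * L) μ :=
      ((integrable_const 1).sub hshInt).mul_const L
    have hIntP : Integrable P μ := (((hsgInt y hy).sub (hsgInt η hη)).sub hIntQ)
    have hnn : 0 ≤ᶠ[ae μ] P := by
      filter_upwards [hx_ae] with x hx
      have := hsg_key c hc0 hc1 hx hη hy
      simp only [hPdef, Pi.zero_apply]
      rw [hLdef]
      linarith
    have hsupport : Set.Ioi (0:ℝ) ⊆ Function.support P := by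
      intro x hx
      have := hsg_key_strict c hc0 hc1 hx hη hy hne
      simp only [Function.mem_support, hPdef]
      rw [hLdef]
      intro habs
      nlinarith [habs]
    have hpos : 0 < ∫ x, P x ∂μ := by
      rw [integral_pos_iff_support_of_nonneg_ae hnn hIntP]
      exact lt_of_lt_of_le hIoi (measure_mono hsupport)
    have hsplit1 : (∫ x, P x ∂μ) = (∫ x, (hsg c y x - hsg c η x) ∂μ)
        - ∫ x, (1 - x / (c * x + (1 - c) * η)) * L ∂μ := by
      rw [hPdef]
      exact integral_sub ((hsgInt y hy).sub (hsgInt η hη)) hIntQ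
    have hsplit2 : (∫ x, (hsg c y x - hsg c η x) ∂μ)
        = (∫ x, hsg c y x ∂μ) - ∫ x, hsg c η x ∂μ := integral_sub (hsgInt y hy) (hsgInt η hη)
    have hsplit3 : (∫ x, (1 - x / (c * x + (1 - c) * η)) * L ∂μ) = 0 := by
      rw [integral_mul_const]
      have : (∫ x, (1 - x / (c * x + (1 - c) * η)) ∂μ)
          = (∫ _x, (1:ℝ) ∂μ) - ∫ x, x / (c * x + (1 - c) * η) ∂μ :=
        integral_sub (integrable_const 1) hshInt
      rw [this, hGη]
      simp
    rw [hsplit1, hsplit2, hsplit3] at hpos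
    linarith
  have hker : ∀ y : ℝ, 0 < y →
      eIntegral μ (fun x => hsKernel c x y) = ((∫ x, hsg c y x ∂μ : ℝ) : EReal) := by
    intro y hy
    refine eIntegral_eq_integral μ (hsg c y) _ ?_ (hsgInt y hy)
    filter_upwards [hx_ae] with x hx
    exact hsKernel_eq_hsg c hc0 hc1 hx hy
  have hInfEq : (⨅ y : {y : ℝ // 0 < y}, eIntegral μ (fun x => hsKernel c x y)) =
      eIntegral μ (fun x => hsKernel c x η) := by
    apply le_antisymm
    · exact iInf_le (fun y : {y : ℝ // 0 < y} => eIntegral μ (fun x => hsKernel c x (y : ℝ))) ⟨η, hη⟩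
    · refine le_iInf fun y => ?_
      rw [hker η hη, hker y y.2]
      rcases eq_or_ne (y : ℝ) η with h | h
      · rw [h]
      · exact le_of_lt (EReal.coe_lt_coe_iff.2 (hmin y y.2 h))
  refine ⟨η, hη, hGη, huniq, hInfEq, ?_, ?_⟩
  · intro y hy hne
    rw [hker η hη, hker y hy]
    exact EReal.coe_lt_coe_iff.2 (hmin y hy hne)
  · rw [hsBary, hInfEq]
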